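/- Let G be a connected simple graph on n ≥ 5 vertices with at most 4 non-cut vertices. If G contains a cycle of length at least 5, then a contradiction follows; equivalently, if sdiam_4(G) = n-1 and G is not a tree, then the circumference of G is 3 or 4. -/

import Mathlib

open SimpleGraph

variable {V : Type*}

/-- The set of non-cut vertices of a graph: vertices whose deletion leaves the
graph (induced on the remaining vertices) connected. -/
def noncutVerts (G : SimpleGraph V) : Set V :=
  {v | (G.induce ({v}ᶜ : Set V)).Connected}

/-- The Steiner distance of a finite vertex set `S`: the minimum number of edges
of a connected subgraph of `G` whose vertex set contains `S`. -/
noncomputable def steinerDist [Fintype V] (G : SimpleGraph V) (S : Finset V) : ℕ :=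
  sInf {m | ∃ H : G.Subgraph, H.Connected ∧ ↑S ⊆ H.verts ∧ H.edgeSet.ncard = m}

/-- The Steiner `k`-diameter of `G`: the maximum Steiner distance over all
`k`-element subsets of the vertex set. -/
noncomputable def sdiam [Fintype V] (G : SimpleGraph V) (k : ℕ) : ℕ :=
  (Finset.powersetCard k (Finset.univ : Finset V)).sup (fun S => steinerDist G S)

namespace StmtAux

variable {G : SimpleGraph V}

/-- `x` and `y` are connected by a walk avoiding `v`. -/
def Conn (G : SimpleGraph V) (v x y : V) : Prop := ∃ p : G.Walk x y, v ∉ p.support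

lemma Conn.symm {v x y : V} (h : Conn G v x y) : Conn G v y x := by
  obtain ⟨p, hp⟩ := h
  exact ⟨p.reverse, by simpa using hp⟩

lemma Conn.trans {v x y z : V} (h1 : Conn G v x y) (h2 : Conn G v y z) : Conn G v x z := by
  obtain ⟨p, hp⟩ := h1
  obtain ⟨q, hq⟩ := h2
  refine ⟨p.append q, ?_⟩
  rw [Walk.mem_support_append_iff]
  rintro (h | h) <;> [exact hp h; exact hq h]

lemma Conn.refl {v x : V} (h : x ≠ v) : Conn G v x x :=
  ⟨Walk.nil, by simpa using fun h' => h h'.symm⟩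

lemma reachable_induce_of_walk {s : Set V} {x y : V} (p : G.Walk x y)
    (hp : ∀ z ∈ p.support, z ∈ s) :
    (G.induce s).Reachable ⟨x, hp x p.start_mem_support⟩ ⟨y, hp y p.end_mem_support⟩ := by
  induction p with
  | nil => exact Reachable.refl _
  | @cons a b c h p ih =>
    have ha : a ∈ s := hp a (by simp)
    have hb : b ∈ s := hp b (by simp [Walk.support_cons])
    have hadj : (G.induce s).Adj ⟨a, ha⟩ ⟨b, hb⟩ := h
    exact hadj.reachable.trans (ih fun z hz => hp z (by simp [Walk.support_cons, hz]))

lemma conn_of_induce_reachable {v x y : V} (hx : x ∈ ({v}ᶜ : Set V)) (hy : y ∈ ({v}ᶜ : Set V))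
    (h : (G.induce ({v}ᶜ : Set V)).Reachable ⟨x, hx⟩ ⟨y, hy⟩) : Conn G v x y := by
  obtain ⟨p⟩ := h
  refine ⟨p.map (Embedding.induce _).toHom, ?_⟩
  show v ∉ (p.map (Embedding.induce ({v}ᶜ : Set V)).toHom).support
  rw [Walk.support_map]
  intro hmem
  obtain ⟨a, _, ha2⟩ := List.mem_map.mp hmem
  exact a.2 ha2

lemma noncut_of_hub {v r : V} (hr : r ≠ v) (h : ∀ y, y ≠ v → Conn G v y r) :
    v ∈ noncutVerts G := by
  show (G.induce ({v}ᶜ : Set V)).Connected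
  rw [connected_iff]
  constructor
  · rintro ⟨a, ha⟩ ⟨b, hb⟩
    have ha' : a ≠ v := ha
    have hb' : b ≠ v := hb
    obtain ⟨p, hp⟩ := (h a ha').trans (h b hb').symm
    have hsub : ∀ z ∈ p.support, z ∈ ({v}ᶜ : Set V) := fun z hz hzv => hp (hzv ▸ hz)
    exact reachable_induce_of_walk p hsub
  · exact ⟨⟨r, hr⟩⟩

lemma prefix_avoid [DecidableEq V] {a b c : V} (p : G.Walk a b) (hnd : p.support.Nodup)
    (hc : c ∈ p.support) (hcb : c ≠ b) : b ∉ (p.takeUntil c hc).support := by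
  have hspec : p.support = (p.takeUntil c hc).support ++ (p.dropUntil c hc).support.tail := by
    conv_lhs => rw [← p.take_spec hc]
    rw [Walk.support_append]
  rw [hspec, List.nodup_append] at hnd
  have hb : b ∈ (p.dropUntil c hc).support.tail :=
    Walk.end_mem_tail_support_of_ne hcb (p.dropUntil c hc)
  exact fun hbt => hnd.2.2 b hbt b hb rfl

lemma mem_support_closed_iff {u x : V} (p : G.Walk u u) (hp : ¬p.Nil) :
    x ∈ p.support ↔ x ∈ p.support.tail := by
  obtain ⟨w, h, q, rfl⟩ := Walk.not_nil_iff.mp hp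
  simp only [Walk.support_cons, List.tail_cons]
  constructor
  · intro h2
    rcases List.mem_cons.mp h2 with rfl | h2
    · exact q.end_mem_support
    · exact h2
  · exact fun h2 => List.mem_cons_of_mem _ h2

lemma cycle_conn [DecidableEq V] {u v : V} (W : G.Walk u u) (hW : W.IsCycle) (hv : v ∈ W.support) :
    ∃ w, w ≠ v ∧ w ∈ W.support ∧ ∀ x ∈ W.support, x ≠ v → Conn G v x w := by
  have hW' : (W.rotate v hv).IsCycle := hW.rotate hv
  have hmem : ∀ x : V, x ∈ (W.rotate v hv).support ↔ x ∈ W.support := by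
    intro x
    rw [mem_support_closed_iff _ hW'.not_nil, mem_support_closed_iff _ hW.not_nil]
    exact (W.support_rotate v hv).mem_iff
  obtain ⟨w, hadj, q, hq⟩ := Walk.not_nil_iff.mp hW'.not_nil
  have hqsup : (W.rotate v hv).support = v :: q.support := by rw [hq, Walk.support_cons]
  have hqnd : q.support.Nodup := by
    have := hW'.support_nodup
    rwa [hqsup, List.tail_cons] at this
  refine ⟨w, hadj.ne', ?_, ?_⟩
  · rw [← hmem, hqsup]
    exact List.mem_cons_of_mem _ q.start_mem_support
  · intro x hx hxv
    have hxq : x ∈ q.support := by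
      have := (hmem x).mpr hx
      rw [hqsup] at this
      rcases List.mem_cons.mp this with rfl | h2
      · exact absurd rfl hxv
      · exact h2
    have hvnot : v ∉ (q.takeUntil x hxq).support := prefix_avoid q hqnd hxq hxv
    exact ⟨(q.takeUntil x hxq).reverse, by simpa using hvnot⟩

lemma branch_noncut [Fintype V] (hG : G.Connected) {v w : V}
    (hB : ∃ x, x ≠ v ∧ ¬ Conn G v x w) :
    ∃ x, x ≠ v ∧ ¬ Conn G v x w ∧ x ∈ noncutVerts G := by
  classical
  set B : Set V := {x | x ≠ v ∧ ¬ Conn G v x w} with hBdef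
  obtain ⟨x, hxB, hmax⟩ := Set.exists_max_image B (fun z => G.dist v z) (Set.toFinite B) hB
  have hxv : x ≠ v := hxB.1
  refine ⟨x, hxB.1, hxB.2, ?_⟩
  have key : ∀ n (y : V), G.dist v y ≤ n → y ≠ x → Conn G x y v := by
    intro n
    induction n with
    | zero =>
      intro y hy hyx
      have hyv : y = v := by
        have := (hG v y).dist_eq_zero_iff.mp (Nat.le_zero.mp hy)
        exact this.symm
      subst hyv
      exact Conn.refl (Ne.symm hxv)
    | succ n ih =>
      intro y hy hyx
      by_cases hyv : y = v
      · subst hyv; exact Conn.refl (Ne.symm hxv)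
      · obtain ⟨p, hp⟩ := (hG v y).exists_walk_length_eq_dist
        have hpos : 0 < G.dist v y := (hG v y).pos_dist_of_ne fun h => hyv h.symm
        have hnn : ¬ p.reverse.Nil := Walk.not_nil_of_ne hyv
        obtain ⟨z, hadj, q, hq⟩ := Walk.not_nil_iff.mp hnn
        have hql : q.length = G.dist v y - 1 := by
          have : p.reverse.length = G.dist v y := by rw [Walk.length_reverse, hp]
          rw [hq, Walk.length_cons] at this
          omega
        have hdz : G.dist v z ≤ n := by
          have h1 : G.dist z v ≤ q.length := SimpleGraph.dist_le q
          rw [SimpleGraph.dist_comm] at h1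
          omega
        by_cases hzx : z = x
        · exfalso
          have hadjxy : G.Adj x y := by rw [← hzx]; exact hadj.symm
          have hyB : y ∈ B := by
            refine ⟨hyv, fun hcw => ?_⟩
            obtain ⟨py, hpy⟩ := hcw
            refine hxB.2 ⟨Walk.cons hadjxy py, ?_⟩
            rw [Walk.support_cons]
            intro hmem
            rcases List.mem_cons.mp hmem with h2 | h2
            · exact hxv h2.symm
            · exact hpy h2
          have h1 : G.dist v y ≤ G.dist v x := hmax y hyB
          have h2 : G.dist v x ≤ q.length := by
            rw [← hzx, SimpleGraph.dist_comm]
            exact SimpleGraph.dist_le q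
          omega
        · obtain ⟨pz, hpz⟩ := ih z hdz hzx
          refine ⟨Walk.cons hadj pz, ?_⟩
          rw [Walk.support_cons]
          intro hmem
          rcases List.mem_cons.mp hmem with h2 | h2
          · exact hyx h2.symm
          · exact hpz h2
  exact noncut_of_hub (Ne.symm hxv) (fun y hy => key (G.dist v y) y le_rfl hy)

end StmtAux

open StmtAux in
theorem stmt_14 [Fintype V] (G : SimpleGraph V)
    (hn : 5 ≤ Fintype.card V) (hG : G.Connected)
    (hnc : (noncutVerts G).ncard ≤ 4)
    (u : V) (W : G.Walk u u) (hW : W.IsCycle) (hlen : 5 ≤ W.length) :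
    False := by
  classical
  have hsubtail : ∀ x ∈ W.support.tail, x ∈ W.support := by
    intro x hx
    rw [W.support_eq_cons]
    exact List.mem_cons_of_mem _ hx
  have key : ∀ v ∈ W.support, ∃ x, x ∈ noncutVerts G ∧
      (x = v ∨ (x ∉ W.support ∧ ∀ c ∈ W.support, ∀ p : G.Walk x c, v ∈ p.support)) := by
    intro v hv
    by_cases hvc : v ∈ noncutVerts G
    · exact ⟨v, hvc, Or.inl rfl⟩
    · obtain ⟨w, hwv, hwsup, hcyc⟩ := cycle_conn W hW hv
      have hBne : ∃ x, x ≠ v ∧ ¬ Conn G v x w := by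
        by_contra hno
        push_neg at hno
        exact hvc (noncut_of_hub hwv fun y hy => hno y hy)
      obtain ⟨x, hxv, hxw, hxnc⟩ := branch_noncut hG hBne
      refine ⟨x, hxnc, Or.inr ⟨?_, ?_⟩⟩
      · intro hxs
        exact hxw (hcyc x hxs hxv)
      · intro c hc p
        by_contra hvp
        have hcv : c ≠ v := fun h => hvp (h ▸ p.end_mem_support)
        exact hxw (Conn.trans ⟨p, hvp⟩ (hcyc c hc hcv))
  choose! f hf1 hf2 using key
  set t := W.support.tail.toFinset with ht
  have htcard : 5 ≤ t.card := by
    rw [ht, List.toFinset_card_of_nodup hW.support_nodup]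
    have h1 : W.support.length = W.length + 1 := W.length_support
    have h2 : W.support.tail.length = W.support.length - 1 := List.length_tail
    omega
  have hmemt : ∀ a ∈ t, a ∈ W.support := by
    intro a hat
    exact hsubtail a (List.mem_toFinset.mp hat)
  have hinj : Set.InjOn f ↑t := by
    intro a hat b hbt hab
    have has : a ∈ W.support := hmemt a (by exact_mod_cast hat)
    have hbs : b ∈ W.support := hmemt b (by exact_mod_cast hbt)
    rcases hf2 a has with h1 | ⟨h1s, h1P⟩
    · rcases hf2 b hbs with h2 | ⟨h2s, h2P⟩
      · rw [← h1, ← h2, hab]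
      · refine absurd ?_ h2s
        rw [← hab, h1]
        exact has
    · rcases hf2 b hbs with h2 | ⟨h2s, h2P⟩
      · refine absurd ?_ h1s
        rw [hab, h2]
        exact hbs
      · by_contra hne
        rw [← hab] at h2P
        obtain ⟨p0⟩ := hG (f a) a
        set p := p0.bypass with hp0
        have hp : p.IsPath := p0.bypass_isPath
        have hbp : b ∈ p.support := h2P a has p
        have hain : a ∈ (p.takeUntil b hbp).support := h1P b hbs (p.takeUntil b hbp)
        exact prefix_avoid p hp.support_nodup hbp (fun h => hne (h.symm)) hain
  have hsub : ↑(t.image f) ⊆ noncutVerts G := by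
    intro x hx
    obtain ⟨a, hat, rfl⟩ := Finset.mem_image.mp (by exact_mod_cast hx)
    exact hf1 a (hmemt a hat)
  have hfinal : 5 ≤ (noncutVerts G).ncard := by
    calc 5 ≤ t.card := htcard
    _ = (t.image f).card := (Finset.card_image_of_injOn hinj).symm
    _ = ((t.image f : Finset V) : Set V).ncard := (Set.ncard_coe_finset _).symm
    _ ≤ (noncutVerts G).ncard := Set.ncard_le_ncard hsub (Set.toFinite _)
  omega
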